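/- There exists a family B of interval partitions such that: (1) |B| ≤ 𝔟; (2) for each I ∈ B and each n, there is l_n with l_n > 0, l_n ≥ n, and |I_n| = 2^{l_n}; (3) for every interval partition J there exists I ∈ B such that for infinitely many n there is k > n with J_k ⊆ I_n. -/

import Mathlib

open Filter Set Cardinal

/-- An interval partition is a strictly increasing `I : ℕ → ℕ` with `I 0 = 0`;
the `n`-th interval is `[I n, I (n+1))`. -/
def IsIntervalPartition (I : ℕ → ℕ) : Prop := I 0 = 0 ∧ StrictMono I

/-- The bounding number `𝔟`. -/
noncomputable def frakB : Cardinal :=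
  sInf { κc : Cardinal | ∃ F : Set (ℕ → ℕ), #F = κc ∧
    ∀ g : ℕ → ℕ, ∃ f ∈ F, ¬ (∀ᶠ n in atTop, f n ≤ g n) }

namespace Stmt12aux

/-- monotone majorant of `f` -/
def fs (f : ℕ → ℕ) (q : ℕ) : ℕ := (Finset.range (q+1)).sup f

lemma fs_mono (f : ℕ → ℕ) {a b : ℕ} (h : a ≤ b) : fs f a ≤ fs f b :=
  Finset.sup_mono (Finset.range_subset_range.2 (by omega))

lemma le_fs (f : ℕ → ℕ) (q : ℕ) : f q ≤ fs f q :=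
  Finset.le_sup (Finset.self_mem_range_succ q)

/-- the interval partition built from `f` -/
def seqI (f : ℕ → ℕ) : ℕ → ℕ
  | 0 => 0
  | n+1 => seqI f n + 2 ^ (max (n+1) (fs f (seqI f n)))

lemma seqI_mono (f : ℕ → ℕ) : StrictMono (seqI f) :=
  strictMono_nat_of_lt_succ (fun n => by
    have : 0 < 2 ^ (max (n+1) (fs f (seqI f n))) := Nat.pow_pos (by norm_num)
    simp only [seqI]; omega)

lemma seqI_ge (f : ℕ → ℕ) (n : ℕ) : n ≤ seqI f n := by
  cases n with
  | zero => simp [seqI]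
  | succ n =>
      have h1 : n + 1 < 2 ^ (n+1) := Nat.lt_two_pow_self
      have h2 : 2 ^ (n+1) ≤ 2 ^ (max (n+1) (fs f (seqI f n))) :=
        Nat.pow_le_pow_right (by norm_num) (le_max_left _ _)
      simp only [seqI]; omega

lemma seqI_ge_two (f : ℕ → ℕ) {n : ℕ} (hn : 1 ≤ n) : 2 ≤ seqI f n := by
  cases n with
  | zero => omega
  | succ n =>
      have h2 : 2 ^ 1 ≤ 2 ^ (max (n+1) (fs f (seqI f n))) :=
        Nat.pow_le_pow_right (by norm_num) (by omega)
      simp only [seqI]; omega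

lemma absorb (f J : ℕ → ℕ) (hJ : IsIntervalPartition J) (n : ℕ) (hn : 1 ≤ n)
    (hS : J (seqI f n + 2) ≤ seqI f (n+1)) :
    ∃ k > n, Set.Ico (J k) (J (k+1)) ⊆ Set.Ico (seqI f n) (seqI f (n+1)) := by
  have hJm : Monotone J := hJ.2.monotone
  have hJge : ∀ q, q ≤ J q := fun q => hJ.2.le_apply
  have hIn2 : 2 ≤ seqI f n := seqI_ge_two f hn
  have hInn : n ≤ seqI f n := seqI_ge f n
  have hex : ∃ k, seqI f n ≤ J k := ⟨seqI f n, hJge _⟩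
  set k₀ := Nat.find hex with hk₀def
  have hk₀ : seqI f n ≤ J k₀ := Nat.find_spec hex
  have hk₀pos : 0 < k₀ := by
    rcases Nat.eq_zero_or_pos k₀ with h | h
    · exfalso; rw [h] at hk₀; rw [hJ.1] at hk₀; omega
    · exact h
  have hk₀pred : ¬ seqI f n ≤ J (k₀ - 1) := Nat.find_min hex (by omega)
  have hk₀le : k₀ ≤ seqI f n := by
    have := hJge (k₀ - 1); omega
  rcases le_or_gt k₀ n with hcase | hcase
  · -- take k = n+1
    refine ⟨n+1, by omega, Set.Ico_subset_Ico ?_ ?_⟩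
    · exact le_trans hk₀ (hJm (by omega))
    · exact le_trans (hJm (by omega : n + 1 + 1 ≤ seqI f n + 2)) hS
  · -- take k = k₀
    refine ⟨k₀, hcase, Set.Ico_subset_Ico hk₀ ?_⟩
    exact le_trans (hJm (by omega : k₀ + 1 ≤ seqI f n + 2)) hS

lemma success_infinite (f J : ℕ → ℕ) (hJ : IsIntervalPartition J)
    (hfreq : ∀ N : ℕ, ∃ m, N ≤ m ∧ J (J (m+2) + 2) < f m) :
    ∀ N : ℕ, ∃ n, N < n ∧ J (seqI f n + 2) ≤ seqI f (n+1) := by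
  intro N
  by_contra hcon
  push_neg at hcon
  -- hcon : ∀ n, N < n → seqI f (n+1) < J (seqI f n + 2)
  obtain ⟨m, hm1, hm2⟩ := hfreq (seqI f (N+1))
  have hJm : Monotone J := hJ.2.monotone
  -- find n with seqI f n ≤ m < seqI f (n+1)
  have hex : ∃ j, m < seqI f j := ⟨m+1, by have := seqI_ge f (m+1); omega⟩
  set n1 := Nat.find hex with hn1def
  have hsp : m < seqI f n1 := Nat.find_spec hex
  have hn1pos : 0 < n1 := by
    rcases Nat.eq_zero_or_pos n1 with h | h
    · exfalso; rw [h] at hsp; simp [seqI] at hsp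
    · exact h
  set n := n1 - 1 with hndef
  have hnlt : ¬ m < seqI f n := Nat.find_min hex (by omega)
  push_neg at hnlt
  have hn1eq : n + 1 = n1 := by omega
  have hm_lt : m < seqI f (n+1) := by rw [hn1eq]; exact hsp
  have hNn : N < n := by
    by_contra h
    push_neg at h
    have : seqI f (n+1) ≤ seqI f (N+1) := (seqI_mono f).monotone (by omega)
    omega
  have hA : seqI f (n+1) < J (seqI f n + 2) := hcon n hNn
  have hB : seqI f (n+2) < J (seqI f (n+1) + 2) := hcon (n+1) (by omega)
  -- chain
  have h1 : f m ≤ fs f (seqI f (n+1)) :=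
    le_trans (le_fs f m) (fs_mono f (by omega))
  have h2 : fs f (seqI f (n+1)) < 2 ^ (max (n+2) (fs f (seqI f (n+1)))) :=
    lt_of_lt_of_le Nat.lt_two_pow_self (Nat.pow_le_pow_right (by norm_num) (le_max_right _ _))
  have h3' : seqI f (n+2) = seqI f (n+1) + 2 ^ (max (n+2) (fs f (seqI f (n+1)))) := rfl
  have h3 : 2 ^ (max (n+2) (fs f (seqI f (n+1)))) ≤ seqI f (n+2) := by omega
  have h4 : J (seqI f (n+1) + 2) ≤ J (J (m+2) + 2) := by
    apply hJm
    have : J (seqI f n + 2) ≤ J (m + 2) := hJm (by omega)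
    omega
  have : f m < f m :=
    lt_of_le_of_lt (le_trans h1 (le_trans (le_of_lt h2) h3))
      (lt_of_lt_of_le hB (le_trans h4 (le_of_lt hm2)))
  omega

end Stmt12aux


/-- Lemma: there is a family `B` of at most `𝔟` many interval partitions, each of whose
intervals has size an exact power `2^{l_n}` with `l_n > 0`, `l_n ≥ n`, such that every
interval partition `J` has infinitely many of its intervals absorbed (with index shift)
by some member of `B`. -/
theorem stmt12 :
    ∃ B : Set (ℕ → ℕ),
      (∀ I ∈ B, IsIntervalPartition I) ∧
      #B ≤ frakB ∧
      (∀ I ∈ B, ∀ n : ℕ, ∃ l : ℕ, 0 < l ∧ n ≤ l ∧ I (n + 1) - I n = 2 ^ l) ∧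
      (∀ J : ℕ → ℕ, IsIntervalPartition J → ∃ I ∈ B,
        {n : ℕ | ∃ k > n, Set.Ico (J k) (J (k + 1)) ⊆ Set.Ico (I n) (I (n + 1))}.Infinite) := by
  classical
  -- extract an unbounded family of size frakB
  have hne : Set.Nonempty { κc : Cardinal | ∃ F : Set (ℕ → ℕ), #F = κc ∧
      ∀ g : ℕ → ℕ, ∃ f ∈ F, ¬ (∀ᶠ n in atTop, f n ≤ g n) } := by
    refine ⟨#(Set.univ : Set (ℕ → ℕ)), Set.univ, rfl, fun g => ⟨fun n => g n + 1, Set.mem_univ _, ?_⟩⟩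
    intro h
    obtain ⟨n, hn⟩ := h.exists
    simp only at hn
    omega
  have hmemB : frakB ∈ { κc : Cardinal | ∃ F : Set (ℕ → ℕ), #F = κc ∧
      ∀ g : ℕ → ℕ, ∃ f ∈ F, ¬ (∀ᶠ n in atTop, f n ≤ g n) } := by
    exact csInf_mem hne
  obtain ⟨F, hF1, hF2⟩ := hmemB
  refine ⟨Stmt12aux.seqI '' F, ?_, ?_, ?_, ?_⟩
  · rintro I ⟨f, -, rfl⟩
    exact ⟨rfl, Stmt12aux.seqI_mono f⟩
  · exact le_trans Cardinal.mk_image_le (le_of_eq hF1)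
  · rintro I ⟨f, -, rfl⟩ n
    refine ⟨max (n+1) (Stmt12aux.fs f (Stmt12aux.seqI f n)), by omega, by omega, ?_⟩
    have : Stmt12aux.seqI f (n+1)
        = Stmt12aux.seqI f n + 2 ^ (max (n+1) (Stmt12aux.fs f (Stmt12aux.seqI f n))) := rfl
    rw [this]
    exact Nat.add_sub_cancel_left _ _
  · intro J hJ
    obtain ⟨f, hfF, hfnd⟩ := hF2 (fun m => J (J (m+2) + 2))
    have hfreq : ∀ N : ℕ, ∃ m, N ≤ m ∧ J (J (m+2) + 2) < f m := by
      intro N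
      rw [Filter.not_eventually] at hfnd
      obtain ⟨m, hm1, hm2⟩ := (Filter.frequently_atTop.mp hfnd) N
      exact ⟨m, hm1, by omega⟩
    refine ⟨Stmt12aux.seqI f, Set.mem_image_of_mem _ hfF, ?_⟩
    apply Set.infinite_of_not_bddAbove
    intro hbdd
    obtain ⟨N, hN⟩ := hbdd
    obtain ⟨n, hn1, hn2⟩ := Stmt12aux.success_infinite f J hJ hfreq N
    have hmem : n ∈ {n : ℕ | ∃ k > n, Set.Ico (J k) (J (k + 1))
        ⊆ Set.Ico (Stmt12aux.seqI f n) (Stmt12aux.seqI f (n + 1))} :=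
      Stmt12aux.absorb f J hJ n (by omega) hn2
    have := hN hmem
    omega
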